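/- Scale symmetry of Kronecker factorizations: for matrices U ∈ ℝ^{n'×m'}, V ∈ ℝ^{n''×m''} and any nonzero scalar s, (sU) ⊗ ((1/s)V) = U ⊗ V, where ⊗ denotes the Kronecker product. Conversely, if U ⊗ V = U' ⊗ V' with all four matrices nonzero, then there exists a nonzero scalar s with U' = sU and V' = (1/s)V. -/

import Mathlib

open Matrix Kronecker

/-- Scale symmetry of Kronecker factorizations: `(sU) ⊗ ((1/s)V) = U ⊗ V` for `s ≠ 0`;
conversely, if `U ⊗ V = U' ⊗ V'` with all four matrices nonzero, then `U' = sU` and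
`V' = (1/s)V` for some nonzero scalar `s`. -/
theorem stmt_17 {n₁ m₁ n₂ m₂ : ℕ}
    (U : Matrix (Fin n₁) (Fin m₁) ℝ) (V : Matrix (Fin n₂) (Fin m₂) ℝ) :
    (∀ s : ℝ, s ≠ 0 → (s • U) ⊗ₖ ((1 / s) • V) = U ⊗ₖ V) ∧
    ∀ (U' : Matrix (Fin n₁) (Fin m₁) ℝ) (V' : Matrix (Fin n₂) (Fin m₂) ℝ),
      U ≠ 0 → V ≠ 0 → U' ≠ 0 → V' ≠ 0 → U ⊗ₖ V = U' ⊗ₖ V' →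
      ∃ s : ℝ, s ≠ 0 ∧ U' = s • U ∧ V' = (1 / s) • V := by
  constructor
  · intro s hs
    ext ⟨i, k⟩ ⟨j, l⟩
    simp only [Matrix.kroneckerMap_apply, Matrix.smul_apply, smul_eq_mul]
    field_simp
  · intro U' V' hU hV hU' hV' heq
    obtain ⟨i0, j0, hUe⟩ : ∃ i j, U i j ≠ 0 := by
      by_contra h; push_neg at h; exact hU (by ext i j; simp [h])
    obtain ⟨k0, l0, hVe⟩ : ∃ k l, V k l ≠ 0 := by
      by_contra h; push_neg at h; exact hV (by ext k l; simp [h])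
    have hent : ∀ i k j l, U i j * V k l = U' i j * V' k l := by
      intro i k j l
      have := congrFun (congrFun heq (i, k)) (j, l)
      simpa [Matrix.kroneckerMap_apply] using this
    have h0 : U i0 j0 * V k0 l0 = U' i0 j0 * V' k0 l0 := hent i0 k0 j0 l0
    have hne : U' i0 j0 * V' k0 l0 ≠ 0 := h0 ▸ mul_ne_zero hUe hVe
    have hU'e : U' i0 j0 ≠ 0 := left_ne_zero_of_mul hne
    have hV'e : V' k0 l0 ≠ 0 := right_ne_zero_of_mul hne
    set s : ℝ := U' i0 j0 / U i0 j0 with hsdef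
    have hs : s ≠ 0 := div_ne_zero hU'e hUe
    have hV0 : V' k0 l0 = 1 / s * V k0 l0 := by
      rw [hsdef]
      field_simp
      linear_combination -h0
    refine ⟨s, hs, ?_, ?_⟩
    · ext i j
      simp only [Matrix.smul_apply, smul_eq_mul]
      have h2 := hent i k0 j l0
      rw [hV0] at h2
      have key : U' i j * V k0 l0 = s * U i j * V k0 l0 := by
        field_simp at h2
        linear_combination (-V k0 l0) * h2
      exact mul_right_cancel₀ hVe key
    · ext k l
      simp only [Matrix.smul_apply, smul_eq_mul]
      have h2 := hent i0 k j0 l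
      have hU0 : U' i0 j0 = s * U i0 j0 := by rw [hsdef]; field_simp
      rw [hU0] at h2
      have key : U i0 j0 * V' k l = U i0 j0 * (1 / s * V k l) := by
        field_simp at h2 ⊢
        linear_combination -h2
      have := mul_left_cancel₀ hUe key
      simpa using this
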